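/- Let n ≥ 1, m ≥ 1, μ > 0, and let γ satisfy γ ≥ γ̲ > 0 and M₂ > 0. Let s₀,…,s_{m−1}, y₀,…,y_{m−1} ∈ ℝⁿ satisfy, for each l, s_lᵀ y_l > 0 and ‖y_l‖² ≤ M₂ (s_lᵀ y_l). Set ŷ_l = y_l + μ s_l. Define matrices B⁽⁰⁾ = (1/γ + μ) I and, for l = 0,…,m−1, B⁽ˡ⁺¹⁾ = B⁽ˡ⁾ − (B⁽ˡ⁾ s_l)(B⁽ˡ⁾ s_l)ᵀ/(s_lᵀ B⁽ˡ⁾ s_l) + ŷ_l ŷ_lᵀ/(s_lᵀ ŷ_l), where each s_l ≠ 0 (so that s_lᵀ B⁽ˡ⁾ s_l > 0 by positive definiteness of B⁽ˡ⁾). Then for every l = 0,…,m, the trace satisfies tr(B⁽ˡ⁾) ≤ n/γ̲ + m·M₂ + (2m + n)μ. -/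

import Mathlib

open scoped RealInnerProductSpace

open Matrix in
private lemma dot_self_pos {n : ℕ} {x : Fin n → ℝ} (hx : x ≠ 0) : 0 < x ⬝ᵥ x := by
  have h : ∃ i, x i ≠ 0 := by
    by_contra h
    push_neg at h
    exact hx (funext fun i => h i)
  obtain ⟨i, hi⟩ := h
  refine Finset.sum_pos' (fun j _ => mul_self_nonneg _)
    ⟨i, Finset.mem_univ i, mul_self_pos.mpr hi⟩

open Matrix in
private lemma vecMulVec_mulVec' {n : ℕ} (u w x : Fin n → ℝ) :
    vecMulVec u w *ᵥ x = (w ⬝ᵥ x) • u := by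
  ext i
  simp only [mulVec, vecMulVec_apply, dotProduct, Pi.smul_apply, smul_eq_mul, Finset.sum_mul]
  exact Finset.sum_congr rfl fun j _ => by ring

open Matrix in
private lemma trace_vecMulVec' {n : ℕ} (u w : Fin n → ℝ) :
    (vecMulVec u w).trace = u ⬝ᵥ w := by
  simp [Matrix.trace, vecMulVec_apply, dotProduct, Matrix.diag]

open Matrix in
private lemma transpose_vecMulVec' {n : ℕ} (u w : Fin n → ℝ) :
    (vecMulVec u w)ᵀ = vecMulVec w u := by
  ext i j
  simp [vecMulVec_apply, mul_comm]

open Matrix in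
private lemma bfgs_step {n : ℕ} {B : Matrix (Fin n) (Fin n) ℝ} (hsym : Bᵀ = B)
    (hpd : ∀ x : Fin n → ℝ, x ≠ 0 → 0 < x ⬝ᵥ B *ᵥ x)
    {s v : Fin n → ℝ} (hs : s ≠ 0) (hsv : 0 < s ⬝ᵥ v) :
    ((B - (s ⬝ᵥ B *ᵥ s)⁻¹ • vecMulVec (B *ᵥ s) (B *ᵥ s) + (s ⬝ᵥ v)⁻¹ • vecMulVec v v)ᵀ
      = B - (s ⬝ᵥ B *ᵥ s)⁻¹ • vecMulVec (B *ᵥ s) (B *ᵥ s) + (s ⬝ᵥ v)⁻¹ • vecMulVec v v)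
    ∧ (∀ x : Fin n → ℝ, x ≠ 0 → 0 < x ⬝ᵥ
        ((B - (s ⬝ᵥ B *ᵥ s)⁻¹ • vecMulVec (B *ᵥ s) (B *ᵥ s) + (s ⬝ᵥ v)⁻¹ • vecMulVec v v) *ᵥ x))
    ∧ (B - (s ⬝ᵥ B *ᵥ s)⁻¹ • vecMulVec (B *ᵥ s) (B *ᵥ s)
        + (s ⬝ᵥ v)⁻¹ • vecMulVec v v).trace ≤ B.trace + (s ⬝ᵥ v)⁻¹ * (v ⬝ᵥ v) := by
  set u : Fin n → ℝ := B *ᵥ s with hu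
  set d : ℝ := s ⬝ᵥ B *ᵥ s with hd
  have hdpos : 0 < d := hpd s hs
  have hdne : d ≠ 0 := ne_of_gt hdpos
  have hfne : s ⬝ᵥ v ≠ 0 := ne_of_gt hsv
  -- symmetry of the quadratic form
  have hsymdot : ∀ a b : Fin n → ℝ, a ⬝ᵥ B *ᵥ b = b ⬝ᵥ B *ᵥ a := by
    intro a b
    rw [dotProduct_mulVec, ← Matrix.mulVec_transpose, hsym, dotProduct_comm]
  refine ⟨?_, ?_, ?_⟩
  · rw [Matrix.transpose_add, Matrix.transpose_sub, Matrix.transpose_smul,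
      Matrix.transpose_smul, transpose_vecMulVec', transpose_vecMulVec', hsym]
  · intro x hx
    have hquad : x ⬝ᵥ ((B - d⁻¹ • vecMulVec u u + (s ⬝ᵥ v)⁻¹ • vecMulVec v v) *ᵥ x)
        = x ⬝ᵥ B *ᵥ x - d⁻¹ * ((u ⬝ᵥ x) * (u ⬝ᵥ x))
          + (s ⬝ᵥ v)⁻¹ * ((v ⬝ᵥ x) * (v ⬝ᵥ x)) := by
      rw [Matrix.add_mulVec, Matrix.sub_mulVec, Matrix.smul_mulVec,
        Matrix.smul_mulVec, vecMulVec_mulVec', vecMulVec_mulVec',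
        dotProduct_add, dotProduct_sub, dotProduct_smul, dotProduct_smul,
        dotProduct_smul, dotProduct_smul]
      have h1 : x ⬝ᵥ u = u ⬝ᵥ x := dotProduct_comm _ _
      have h2 : x ⬝ᵥ v = v ⬝ᵥ x := dotProduct_comm _ _
      rw [h1, h2]
      simp only [smul_eq_mul]
      try ring
    set c : ℝ := u ⬝ᵥ x with hc
    set z : Fin n → ℝ := x - (c / d) • s with hz
    have hzq : z ⬝ᵥ B *ᵥ z = x ⬝ᵥ B *ᵥ x - d⁻¹ * (c * c) := by
      have hBz : B *ᵥ z = B *ᵥ x - (c / d) • u := by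
        rw [hz, Matrix.mulVec_sub, Matrix.mulVec_smul]
      rw [hz, hBz, sub_dotProduct, dotProduct_sub, dotProduct_sub,
        smul_dotProduct, smul_dotProduct, dotProduct_smul, dotProduct_smul]
      have h1 : s ⬝ᵥ B *ᵥ x = c := by
        rw [hsymdot s x, hc, hu, dotProduct_comm]
      have h2 : x ⬝ᵥ u = c := dotProduct_comm _ _
      have h3 : s ⬝ᵥ u = d := rfl
      simp only [smul_eq_mul]
      rw [h1, h2, h3]
      field_simp
      try ring
    rw [hquad]
    by_cases hzz : z = 0
    · -- x is a multiple of s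
      have hxts : x = (c / d) • s := by
        have := hzz
        rw [hz, sub_eq_zero] at this
        exact this
      have htne : c / d ≠ 0 := by
        intro h
        rw [h, zero_smul] at hxts
        exact hx hxts
      have hvx : v ⬝ᵥ x = (c / d) * (s ⬝ᵥ v) := by
        rw [hxts, dotProduct_smul, smul_eq_mul, dotProduct_comm]
      have h0 : x ⬝ᵥ B *ᵥ x - d⁻¹ * (c * c) = 0 := by
        rw [← hzq, hzz]
        simp
      rw [hvx]
      have : 0 < (s ⬝ᵥ v)⁻¹ * (c / d * (s ⬝ᵥ v) * (c / d * (s ⬝ᵥ v))) := by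
        have h1 : c / d * (s ⬝ᵥ v) ≠ 0 := mul_ne_zero htne hfne
        have h2 : 0 < (c / d * (s ⬝ᵥ v)) * (c / d * (s ⬝ᵥ v)) :=
          lt_of_le_of_ne (mul_self_nonneg _) (Ne.symm (mul_ne_zero h1 h1))
        exact mul_pos (inv_pos.mpr hsv) h2
      linarith
    · have hzpos : 0 < z ⬝ᵥ B *ᵥ z := hpd z hzz
      have hnn : 0 ≤ (s ⬝ᵥ v)⁻¹ * ((v ⬝ᵥ x) * (v ⬝ᵥ x)) := by
        exact mul_nonneg (le_of_lt (inv_pos.mpr hsv)) (mul_self_nonneg _)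
      rw [hzq] at hzpos
      linarith
  · rw [Matrix.trace_add, Matrix.trace_sub, Matrix.trace_smul, Matrix.trace_smul,
      trace_vecMulVec', trace_vecMulVec', smul_eq_mul, smul_eq_mul]
    have h1 : 0 ≤ d⁻¹ * (u ⬝ᵥ u) :=
      mul_nonneg (le_of_lt (inv_pos.mpr hdpos)) (by
        exact Finset.sum_nonneg fun i _ => mul_self_nonneg _)
    linarith

private lemma inner_eq_dot {n : ℕ} (x y : EuclideanSpace ℝ (Fin n)) :
    ⟪x, y⟫ = dotProduct (x : Fin n → ℝ) (y : Fin n → ℝ) := by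
  simp [PiLp.inner_apply, dotProduct, mul_comm]

open Matrix in
/-- **Trace bound for the regularized L-BFGS matrices.** Starting from
`B⁽⁰⁾ = (1 / γ + μ) I` and performing `m` BFGS updates with the regularized pairs
`(s_l, ŷ_l)`, `ŷ_l = y_l + μ s_l`, where `s_lᵀ y_l > 0` and `‖y_l‖² ≤ M₂ (s_lᵀ y_l)`,
every matrix in the recursion satisfies `tr(B⁽ˡ⁾) ≤ n/γ̲ + m M₂ + (2m + n) μ`. -/
theorem regularized_lbfgs_trace_bound (n m : ℕ) (hn : 1 ≤ n) (hm : 1 ≤ m)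
    (μ γ γlow M₂ : ℝ) (hμ : 0 < μ) (hγlow : 0 < γlow) (hγ : γlow ≤ γ) (hM₂ : 0 < M₂)
    (s y yhat : ℕ → EuclideanSpace ℝ (Fin n))
    (hs : ∀ l < m, s l ≠ 0)
    (hsy : ∀ l < m, 0 < ⟪s l, y l⟫)
    (hy : ∀ l < m, ‖y l‖ ^ 2 ≤ M₂ * ⟪s l, y l⟫)
    (hyhat : ∀ l < m, yhat l = y l + μ • s l)
    (Bseq : ℕ → Matrix (Fin n) (Fin n) ℝ)
    (hB0 : Bseq 0 = (1 / γ + μ) • (1 : Matrix (Fin n) (Fin n) ℝ))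
    (hrec : ∀ l < m, Bseq (l + 1) =
      Bseq l
        - (⟪s l, Matrix.toEuclideanLin (Bseq l) (s l)⟫)⁻¹ •
            Matrix.vecMulVec (Matrix.toEuclideanLin (Bseq l) (s l))
              (Matrix.toEuclideanLin (Bseq l) (s l))
        + (⟪s l, yhat l⟫)⁻¹ • Matrix.vecMulVec (yhat l) (yhat l)) :
    ∀ l ≤ m, (Bseq l).trace ≤ (n : ℝ) / γlow + m * M₂ + (2 * m + n) * μ := by
  have hγpos : 0 < γ := lt_of_lt_of_le hγlow hγ
  have hapos : 0 < 1 / γ + μ := by positivity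
  -- main induction: symmetry, positive definiteness, and incremental trace bound
  have main : ∀ l, l ≤ m →
      ((Bseq l)ᵀ = Bseq l ∧ ∀ x : Fin n → ℝ, x ≠ 0 → 0 < dotProduct x (Bseq l *ᵥ x)) ∧
      (Bseq l).trace ≤ (n : ℝ) * (1 / γ + μ) + l * (M₂ + 2 * μ) := by
    intro l
    induction l with
    | zero =>
      intro _
      refine ⟨⟨?_, ?_⟩, ?_⟩
      · rw [hB0, Matrix.transpose_smul, Matrix.transpose_one]
      · intro x hx
        rw [hB0, Matrix.smul_mulVec, Matrix.one_mulVec, dotProduct_smul,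
          smul_eq_mul]
        exact mul_pos hapos (dot_self_pos hx)
      · rw [hB0, Matrix.trace_smul, Matrix.trace_one, smul_eq_mul]
        simp only [Nat.cast_zero, zero_mul, add_zero, Fintype.card_fin]
        rw [mul_comm]
    | succ l ih =>
      intro hl
      have hlm : l < m := hl
      obtain ⟨⟨hsym, hpd⟩, htr⟩ := ih (le_of_lt hlm)
      -- rewrite the recursion in dot-product form
      have h1 : ⟪s l, Matrix.toEuclideanLin (Bseq l) (s l)⟫
          = dotProduct (s l : Fin n → ℝ) (Bseq l *ᵥ (s l : Fin n → ℝ)) :=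
        inner_eq_dot _ _
      have h2 : ⟪s l, yhat l⟫
          = dotProduct (s l : Fin n → ℝ) (yhat l : Fin n → ℝ) := inner_eq_dot _ _
      have hrecl : Bseq (l + 1) =
          Bseq l
            - (dotProduct (s l : Fin n → ℝ) (Bseq l *ᵥ (s l : Fin n → ℝ)))⁻¹ •
                Matrix.vecMulVec (Bseq l *ᵥ (s l : Fin n → ℝ)) (Bseq l *ᵥ (s l : Fin n → ℝ))
            + (dotProduct (s l : Fin n → ℝ) (yhat l : Fin n → ℝ))⁻¹ •
                Matrix.vecMulVec (yhat l : Fin n → ℝ) (yhat l : Fin n → ℝ) := by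
        rw [hrec l hlm, h1, h2]
        rfl
      -- facts about the data
      have hsne : (s l : Fin n → ℝ) ≠ 0 := by simpa using hs l hlm
      have hsyl : 0 < dotProduct (s l : Fin n → ℝ) (y l : Fin n → ℝ) := by
        rw [← inner_eq_dot]; exact hsy l hlm
      have hss : 0 ≤ dotProduct (s l : Fin n → ℝ) (s l : Fin n → ℝ) :=
        Finset.sum_nonneg fun i _ => mul_self_nonneg _
      have hyhatl : (yhat l : Fin n → ℝ) = (y l : Fin n → ℝ) + μ • (s l : Fin n → ℝ) := by
        rw [hyhat l hlm]
        rfl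
      have hsyhat : 0 < dotProduct (s l : Fin n → ℝ) (yhat l : Fin n → ℝ) := by
        rw [hyhatl, dotProduct_add, dotProduct_smul, smul_eq_mul]
        nlinarith
      have step := bfgs_step hsym hpd hsne hsyhat
      obtain ⟨hsym', hpd', htr'⟩ := step
      rw [← hrecl] at hsym' hpd' htr'
      refine ⟨⟨hsym', hpd'⟩, ?_⟩
      -- per-step trace increment bound
      have hyy : dotProduct (y l : Fin n → ℝ) (y l : Fin n → ℝ)
          ≤ M₂ * dotProduct (s l : Fin n → ℝ) (y l : Fin n → ℝ) := by
        have := hy l hlm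
        rwa [inner_eq_dot, ← real_inner_self_eq_norm_sq,
          inner_eq_dot] at this
      have hstep : (dotProduct (s l : Fin n → ℝ) (yhat l : Fin n → ℝ))⁻¹ *
          dotProduct (yhat l : Fin n → ℝ) (yhat l : Fin n → ℝ) ≤ M₂ + 2 * μ := by
        rw [inv_mul_le_iff₀ hsyhat]
        have e1 : dotProduct (yhat l : Fin n → ℝ) (yhat l : Fin n → ℝ)
            = dotProduct (y l : Fin n → ℝ) (y l : Fin n → ℝ)
              + 2 * μ * dotProduct (s l : Fin n → ℝ) (y l : Fin n → ℝ)
              + μ ^ 2 * dotProduct (s l : Fin n → ℝ) (s l : Fin n → ℝ) := by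
          rw [hyhatl, dotProduct_add, add_dotProduct, add_dotProduct,
            dotProduct_smul, smul_dotProduct, smul_dotProduct,
            dotProduct_smul, smul_eq_mul, smul_eq_mul, smul_eq_mul,
            dotProduct_comm (y l : Fin n → ℝ) (s l : Fin n → ℝ)]
          simp only [smul_eq_mul]
          ring
        have e2 : dotProduct (s l : Fin n → ℝ) (yhat l : Fin n → ℝ)
            = dotProduct (s l : Fin n → ℝ) (y l : Fin n → ℝ)
              + μ * dotProduct (s l : Fin n → ℝ) (s l : Fin n → ℝ) := by
          rw [hyhatl, dotProduct_add, dotProduct_smul, smul_eq_mul]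
        rw [e1, e2]
        nlinarith [mul_nonneg hμ.le hss, mul_nonneg (mul_nonneg hμ.le hμ.le) hss,
          mul_nonneg hM₂.le (mul_nonneg hμ.le hss)]
      have : (Bseq (l + 1)).trace ≤ (Bseq l).trace + (M₂ + 2 * μ) := by
        calc (Bseq (l + 1)).trace
            ≤ (Bseq l).trace + (dotProduct (s l : Fin n → ℝ) (yhat l : Fin n → ℝ))⁻¹ *
              dotProduct (yhat l : Fin n → ℝ) (yhat l : Fin n → ℝ) := htr'
          _ ≤ (Bseq l).trace + (M₂ + 2 * μ) := by linarith
      have hcast : ((l + 1 : ℕ) : ℝ) = (l : ℝ) + 1 := by push_cast; ring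
      rw [hcast]
      nlinarith
  intro l hl
  obtain ⟨_, htr⟩ := main l hl
  have h1 : (n : ℝ) * (1 / γ) ≤ (n : ℝ) / γlow := by
    rw [mul_one_div]
    exact div_le_div_of_nonneg_left (Nat.cast_nonneg n) hγlow hγ
  have hlm : (l : ℝ) ≤ (m : ℝ) := Nat.cast_le.mpr hl
  have hM2μ : 0 < M₂ + 2 * μ := by positivity
  nlinarith [Nat.cast_nonneg (α := ℝ) n]
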